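/- Let G be a simple graph on a finite vertex set and let NM(G) = A·L be its neighbourhood matrix. Then for all vertices i and j, the vertices i and j are adjacent in G if and only if NM(G)[i,j] > 0. (Hence the graph G can be reconstructed from its neighbourhood matrix.) -/

import Mathlib

open SimpleGraph Matrix Finset

theorem adj_iff_nm_pos {V : Type*} [Fintype V] [DecidableEq V] (G : SimpleGraph V)
    [DecidableRel G.Adj] (i j : V) :
    G.Adj i j ↔ 0 < (G.adjMatrix ℤ * G.lapMatrix ℤ) i j := by
  have hentry : (G.adjMatrix ℤ * G.lapMatrix ℤ) i j =
      (∑ k ∈ G.neighborFinset i, if k = j then (G.degree j : ℤ) else 0)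
      - ∑ k ∈ G.neighborFinset i, if G.Adj k j then (1 : ℤ) else 0 := by
    rw [adjMatrix_mul_apply, ← Finset.sum_sub_distrib]
    refine Finset.sum_congr rfl fun k _ => ?_
    simp only [lapMatrix, degMatrix, Matrix.sub_apply, Matrix.diagonal_apply,
      adjMatrix_apply]
    congr 1
    split_ifs with h
    · subst h; rfl
    · rfl
  have hcard : (∑ k ∈ G.neighborFinset i, if G.Adj k j then (1 : ℤ) else 0)
      = ((G.neighborFinset i ∩ G.neighborFinset j).card : ℤ) := by
    rw [Finset.sum_boole]
    congr 1
    congr 1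
    ext k
    simp [mem_neighborFinset, adj_comm, Finset.mem_filter, Finset.mem_inter]
  constructor
  · intro hadj
    rw [hentry, hcard, Finset.sum_ite_eq' , if_pos (by simpa using hadj)]
    have hsub : G.neighborFinset i ∩ G.neighborFinset j ⊆ (G.neighborFinset j).erase i := by
      intro k hk
      simp only [Finset.mem_inter, mem_neighborFinset] at hk
      exact Finset.mem_erase.2 ⟨fun h => G.loopless.irrefl i (h ▸ hk.1), by simpa using hk.2⟩
    have hle : (G.neighborFinset i ∩ G.neighborFinset j).card ≤ G.degree j - 1 := by
      have := Finset.card_le_card hsub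
      rwa [Finset.card_erase_of_mem (by simpa [adj_comm] using hadj)] at this
    have hdeg : 1 ≤ G.degree j := by
      have : i ∈ G.neighborFinset j := by simpa [adj_comm] using hadj
      exact Finset.card_pos.2 ⟨i, this⟩
    omega
  · intro hpos
    by_contra hadj
    rw [hentry, hcard] at hpos
    have : (∑ k ∈ G.neighborFinset i, if k = j then (G.degree j : ℤ) else 0) = 0 := by
      rw [Finset.sum_ite_eq', if_neg (by simpa using hadj)]
    omega
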